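/- Assume α_k → ∞ and ε_k → 0, and let the sequences satisfy the inexact penalty KKT conditions for every k. Suppose K ⊆ ℕ is infinite, x^k → x* along K, and α_k·y_i^k → 0 along K for every index i with x*_i ≠ 0. Then x* ∈ X and x* is an AS-stationary point of (SPO). -/

import Mathlib

open Filter Topology

noncomputable section

/-- Euclidean n-space. -/
abbrev E (n : ℕ) : Type := EuclideanSpace ℝ (Fin n)

/-- Regard a plain function as a vector of Euclidean space. -/
def vec {ι : Type*} [Fintype ι] (v : ι → ℝ) : EuclideanSpace ℝ ι :=
  (WithLp.equiv 2 (ι → ℝ)).symm v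

/-- The SP-Lagrangian L(x, λ, μ) = f(x) + λᵀg(x) + μᵀh(x). -/
def LSP {n m q : ℕ} (f : E n → ℝ) (g : Fin m → E n → ℝ) (h : Fin q → E n → ℝ)
    (lam : Fin m → ℝ) (mu : Fin q → ℝ) (x : E n) : ℝ :=
  f x + (∑ i, lam i * g i x) + (∑ j, mu j * h j x)

/-- AS-stationarity (approximate S-stationarity) of x* for (SPO). -/
def ASStat {n m q : ℕ} (f : E n → ℝ) (g : Fin m → E n → ℝ) (h : Fin q → E n → ℝ)
    (xstar : E n) : Prop :=
  ∃ (xk : ℕ → E n) (lamk : ℕ → Fin m → ℝ) (muk : ℕ → Fin q → ℝ),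
    Tendsto xk atTop (𝓝 xstar) ∧
    (∀ k i, 0 ≤ lamk k i) ∧
    (∀ i, xstar i ≠ 0 →
      Tendsto (fun k => gradient (LSP f g h (lamk k) (muk k)) (xk k) i) atTop (𝓝 0)) ∧
    (∀ i, Tendsto (fun k => min (-(g i (xk k))) (lamk k i)) atTop (𝓝 0))

/-- The inexact penalty KKT conditions at stage k (step 2 of the exact penalty
algorithm). -/
def inexactKKT {n m q : ℕ} (f : E n → ℝ) (g : Fin m → E n → ℝ) (h : Fin q → E n → ℝ)
    (p : Fin n → ℝ → ℝ) (α ε : ℝ)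
    (x y : E n) (νx νy : E n) (lam : Fin m → ℝ) (mu : Fin q → ℝ) : Prop :=
  (∀ i, 0 ≤ x i) ∧ (∀ i, 0 ≤ y i) ∧ (∀ i, 0 ≤ lam i) ∧
  (∀ i, 0 ≤ νx i) ∧ (∀ i, 0 ≤ νy i) ∧
  ‖gradient f x + (∑ i, lam i • gradient (g i) x) + (∑ j, mu j • gradient (h j) x) +
      α • y - νx‖ ≤ ε ∧
  ‖vec (fun i => deriv (p i) (y i) + α * x i - νy i)‖ ≤ ε ∧
  (∀ i, |min (-(g i x)) (lam i)| ≤ ε) ∧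
  ‖vec (fun j => h j x)‖ ≤ ε ∧
  (∀ i, min (x i) (νx i) ≤ ε) ∧
  (∀ i, min (y i) (νy i) ≤ ε)

/-- Any coordinate of a Euclidean vector is bounded by its norm. -/
lemma abs_apply_le_norm {ι : Type*} [Fintype ι] (v : EuclideanSpace ℝ ι) (i : ι) :
    |v i| ≤ ‖v‖ := by
  rw [EuclideanSpace.norm_eq]
  have h1 : |v i| = Real.sqrt (‖v i‖ ^ 2) := by
    rw [Real.norm_eq_abs, Real.sqrt_sq_eq_abs, abs_abs]
  rw [h1]
  apply Real.sqrt_le_sqrt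
  exact Finset.single_le_sum (f := fun j => ‖v j‖ ^ 2)
    (fun j _ => sq_nonneg _) (Finset.mem_univ i)

/-- The gradient of the SP-Lagrangian. -/
lemma gradient_LSP {n m q : ℕ} {f : E n → ℝ} {g : Fin m → E n → ℝ} {h : Fin q → E n → ℝ}
    (hf : Differentiable ℝ f) (hg : ∀ i, Differentiable ℝ (g i))
    (hh : ∀ j, Differentiable ℝ (h j)) (lam : Fin m → ℝ) (mu : Fin q → ℝ) (x : E n) :
    gradient (LSP f g h lam mu) x =
      gradient f x + (∑ i, lam i • gradient (g i) x) + (∑ j, mu j • gradient (h j) x) := by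
  have Hf : HasFDerivAt f (fderiv ℝ f x) x := (hf x).hasFDerivAt
  have Hsum1 : HasFDerivAt (fun y => ∑ i, lam i * g i y)
      (∑ i, lam i • fderiv ℝ (g i) x) x :=
    HasFDerivAt.fun_sum fun i _ => ((hg i x).hasFDerivAt).const_mul (lam i)
  have Hsum2 : HasFDerivAt (fun y => ∑ j, mu j * h j y)
      (∑ j, mu j • fderiv ℝ (h j) x) x :=
    HasFDerivAt.fun_sum fun j _ => ((hh j x).hasFDerivAt).const_mul (mu j)
  have H : HasFDerivAt (LSP f g h lam mu)
      (fderiv ℝ f x + (∑ i, lam i • fderiv ℝ (g i) x) + (∑ j, mu j • fderiv ℝ (h j) x)) x :=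
    (Hf.add Hsum1).add Hsum2
  have hgr : gradient (LSP f g h lam mu) x =
      (InnerProductSpace.toDual ℝ (E n)).symm
        (fderiv ℝ f x + (∑ i, lam i • fderiv ℝ (g i) x) + (∑ j, mu j • fderiv ℝ (h j) x)) := by
    rw [gradient, H.fderiv]
  rw [hgr]
  simp only [map_add, map_sum, LinearIsometryEquiv.map_smulₛₗ, starRingEnd_apply, star_trivial]
  rfl

/-- if additionally α_k·y_i^k → 0 along K for all i ∉ I₀(x*),
then the limit x* is feasible and AS-stationary for (SPO). -/
theorem stmt_18 {n m q : ℕ} (hn : 1 ≤ n) {ρ : ℝ} (hρ : 0 < ρ)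
    (f : E n → ℝ) (g : Fin m → E n → ℝ) (h : Fin q → E n → ℝ)
    (hf : ContDiff ℝ 1 f) (hg : ∀ i, ContDiff ℝ 1 (g i)) (hh : ∀ j, ContDiff ℝ 1 (h j))
    (p : Fin n → ℝ → ℝ) (s : Fin n → ℝ)
    (hp : ∀ i, ContDiff ℝ 1 (p i))
    (hconv : ∀ i, ConvexOn ℝ Set.univ (p i))
    (hspos : ∀ i, 0 < s i)
    (hmin : ∀ i t, p i (s i) ≤ p i t)
    (hstrict : ∀ i t, t ≠ s i → p i (s i) < p i t)
    (hscale : ∀ i, p i 0 - p i (s i) = ρ)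
    (αk εk : ℕ → ℝ) (hαpos : ∀ k, 0 < αk k) (hεnn : ∀ k, 0 ≤ εk k)
    (hα : Tendsto αk atTop atTop) (hε : Tendsto εk atTop (𝓝 0))
    (xk yk νxk νyk : ℕ → E n) (lamk : ℕ → Fin m → ℝ) (muk : ℕ → Fin q → ℝ)
    (hKKT : ∀ k, inexactKKT f g h p (αk k) (εk k) (xk k) (yk k) (νxk k) (νyk k)
      (lamk k) (muk k))
    (K : Set ℕ) (hK : K.Infinite) (xstar : E n)
    (hconv' : Tendsto xk (atTop ⊓ Filter.principal K) (𝓝 xstar))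
    (hαy : ∀ i, xstar i ≠ 0 →
      Tendsto (fun k => αk k * yk k i) (atTop ⊓ Filter.principal K) (𝓝 0)) :
    ((∀ i, g i xstar ≤ 0) ∧ (∀ j, h j xstar = 0) ∧ (∀ i, 0 ≤ xstar i)) ∧
    ASStat f g h xstar := by
  classical
  -- a strictly monotone enumeration of K
  set φ : ℕ → ℕ := Nat.nth (· ∈ K) with hφdef
  have hKs : (setOf (· ∈ K)).Infinite := hK
  have hmono : StrictMono φ := Nat.nth_strictMono hKs
  have hmem : ∀ k, φ k ∈ K := fun k => Nat.nth_mem_of_infinite hKs k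
  have hφtop : Tendsto φ atTop atTop := hmono.tendsto_atTop
  have hφ : Tendsto φ atTop (atTop ⊓ Filter.principal K) :=
    tendsto_inf.mpr ⟨hφtop, tendsto_principal.mpr (Eventually.of_forall hmem)⟩
  have hx' : Tendsto (fun k => xk (φ k)) atTop (𝓝 xstar) := hconv'.comp hφ
  have hε' : Tendsto (fun k => εk (φ k)) atTop (𝓝 0) := hε.comp hφtop
  -- coordinatewise convergence
  have hxco : ∀ i : Fin n, Tendsto (fun k => xk (φ k) i) atTop (𝓝 (xstar i)) := fun i =>
    ((EuclideanSpace.proj i).continuous.tendsto xstar).comp hx'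
  -- feasibility of g
  have hgfeas : ∀ i, g i xstar ≤ 0 := by
    intro i
    have hb : ∀ k, g i (xk (φ k)) ≤ εk (φ k) := by
      intro k
      have h1 := (hKKT (φ k)).2.2.2.2.2.2.2.1 i
      have h2 := abs_le.mp h1
      have h3 : min (-(g i (xk (φ k)))) (lamk (φ k) i) ≤ -(g i (xk (φ k))) := min_le_left _ _
      linarith [h2.1]
    have hgt : Tendsto (fun k => g i (xk (φ k))) atTop (𝓝 (g i xstar)) :=
      ((hg i).continuous.tendsto xstar).comp hx'
    exact le_of_tendsto_of_tendsto' hgt hε' hb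
  -- feasibility of h
  have hhfeas : ∀ j, h j xstar = 0 := by
    intro j
    have hb : ∀ k, ‖h j (xk (φ k))‖ ≤ εk (φ k) := by
      intro k
      have h1 := (hKKT (φ k)).2.2.2.2.2.2.2.2.1
      calc ‖h j (xk (φ k))‖ = |vec (fun j' => h j' (xk (φ k))) j| := rfl
        _ ≤ ‖vec (fun j' => h j' (xk (φ k)))‖ := abs_apply_le_norm _ _
        _ ≤ εk (φ k) := h1
    have hgt : Tendsto (fun k => h j (xk (φ k))) atTop (𝓝 (h j xstar)) :=
      ((hh j).continuous.tendsto xstar).comp hx'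
    have h0 : Tendsto (fun k => h j (xk (φ k))) atTop (𝓝 0) := squeeze_zero_norm hb hε'
    exact tendsto_nhds_unique hgt h0
  -- nonnegativity of x*
  have hxnn : ∀ i, 0 ≤ xstar i := by
    intro i
    exact ge_of_tendsto' (hxco i) fun k => (hKKT (φ k)).1 i
  refine ⟨⟨hgfeas, hhfeas, hxnn⟩, ?_⟩
  -- AS-stationarity
  refine ⟨fun k => xk (φ k), fun k => lamk (φ k), fun k => muk (φ k), hx', ?_, ?_, ?_⟩
  · exact fun k i => (hKKT (φ k)).2.2.1 i
  · -- gradient condition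
    intro i hi
    have hc : 0 < xstar i := lt_of_le_of_ne (hxnn i) (Ne.symm hi)
    have hdf : Differentiable ℝ f := hf.differentiable one_ne_zero
    have hdg : ∀ i', Differentiable ℝ (g i') := fun i' => (hg i').differentiable one_ne_zero
    have hdh : ∀ j, Differentiable ℝ (h j) := fun j => (hh j).differentiable one_ne_zero
    set D : ℕ → E n := fun k =>
      gradient f (xk (φ k)) + (∑ i', lamk (φ k) i' • gradient (g i') (xk (φ k))) +
        (∑ j, muk (φ k) j • gradient (h j) (xk (φ k))) with hD
    have hgradeq : ∀ k, gradient (LSP f g h (lamk (φ k)) (muk (φ k))) (xk (φ k)) = D k :=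
      fun k => gradient_LSP hdf hdg hdh _ _ _
    -- component bound from the KKT gradient condition
    have hcomp : ∀ k, |D k i + αk (φ k) * yk (φ k) i - νxk (φ k) i| ≤ εk (φ k) := by
      intro k
      have h1 := (hKKT (φ k)).2.2.2.2.2.1
      have h2 : |(D k + αk (φ k) • yk (φ k) - νxk (φ k)) i| ≤ εk (φ k) :=
        le_trans (abs_apply_le_norm _ _) h1
      have h3 : (D k + αk (φ k) • yk (φ k) - νxk (φ k)) i
          = D k i + αk (φ k) * yk (φ k) i - νxk (φ k) i := by
        simp [PiLp.sub_apply, PiLp.add_apply, PiLp.smul_apply, smul_eq_mul]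
      rwa [h3] at h2
    have hw : Tendsto (fun k => D k i + αk (φ k) * yk (φ k) i - νxk (φ k) i) atTop (𝓝 0) :=
      squeeze_zero_norm (fun k => hcomp k) hε'
    -- α y → 0 along the subsequence
    have hαy' : Tendsto (fun k => αk (φ k) * yk (φ k) i) atTop (𝓝 0) :=
      (hαy i hi).comp hφ
    -- νx_i → 0 along the subsequence
    have hνx : Tendsto (fun k => νxk (φ k) i) atTop (𝓝 0) := by
      have hev1 : ∀ᶠ k in atTop, εk (φ k) < xstar i / 2 :=
        hε'.eventually (eventually_lt_nhds (by linarith) )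
      have hev2 : ∀ᶠ k in atTop, xstar i / 2 < xk (φ k) i :=
        (hxco i).eventually (eventually_gt_nhds (by linarith))
      have hev : ∀ᶠ k in atTop, νxk (φ k) i ≤ εk (φ k) := by
        filter_upwards [hev1, hev2] with k h1 h2
        have h3 := (hKKT (φ k)).2.2.2.2.2.2.2.2.2.1 i
        rcases min_le_iff.mp h3 with h4 | h4
        · linarith
        · exact h4
      exact squeeze_zero' (Eventually.of_forall fun k => (hKKT (φ k)).2.2.2.1 i) hev hε'
    have hfinal : Tendsto (fun k =>
        (D k i + αk (φ k) * yk (φ k) i - νxk (φ k) i) - αk (φ k) * yk (φ k) i + νxk (φ k) i)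
        atTop (𝓝 (0 - 0 + 0)) := (hw.sub hαy').add hνx
    have heq : (fun k =>
        (D k i + αk (φ k) * yk (φ k) i - νxk (φ k) i) - αk (φ k) * yk (φ k) i + νxk (φ k) i)
        = fun k => D k i := by
      funext k; ring
    rw [heq] at hfinal
    simp only [sub_zero, add_zero] at hfinal
    refine hfinal.congr ?_
    intro k
    rw [hgradeq k]
  · -- complementarity condition
    intro i
    exact squeeze_zero_norm (fun k => (hKKT (φ k)).2.2.2.2.2.2.2.1 i) hε'
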